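/- Let 𝔤 be the 8-dimensional real vector space with basis e₁,…,e₈ and skew-symmetric bracket determined by [e₁,e₂] = √5 e₅, [e₃,e₄] = √5 e₆, [e₁,e₅] = √3 e₇, [e₂,e₄] = √7 e₇, [e₃,e₆] = √3 e₇, [e₁,e₃] = √7 e₈, [e₂,e₅] = √3 e₈, [e₄,e₆] = √3 e₈ (all other brackets of basis vectors zero). Then 𝔤 is a nilpotent Lie algebra (the Jacobi identity holds), the basis is nice, and the diagonal metric making e₁,…,e₈ orthogonal with ⟨eᵢ,eᵢ⟩ = (1,1,1,1,−1,−1,1,1), of signature (6,2), satisfies condition (E): ric = ½ id. -/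
import Mathlib


open scoped BigOperators

/-- The bilinear bracket on `Fin n → ℝ` determined by structure constants `c`. -/
def bracket {n : ℕ} (c : Fin n → Fin n → Fin n → ℝ) (x y : Fin n → ℝ) : Fin n → ℝ :=
  fun k => ∑ i, ∑ j, x i * y j * c i j k

/-- `c` is the family of structure constants of a nilpotent Lie algebra for which
the standard basis of `Fin n → ℝ` is a nice basis. -/
structure IsNiceNilpotent {n : ℕ} (c : Fin n → Fin n → Fin n → ℝ) : Prop where
  skew : ∀ i j k, c i j k = - c j i k
  jacobi : ∀ x y z : Fin n → ℝ,
    bracket c (bracket c x y) z + bracket c (bracket c y z) x + bracket c (bracket c z x) y = 0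
  nilpotent : ∃ N : ℕ, ∀ (v : Fin N → Fin n → ℝ) (w : Fin n → ℝ),
    (List.ofFn v).foldr (bracket c) w = 0
  nice_k : ∀ i j k k', c i j k ≠ 0 → c i j k' ≠ 0 → k = k'
  nice_j : ∀ i j j' k, c i j k ≠ 0 → c i j' k ≠ 0 → j = j'

/-- Entry `h` of the row of the root matrix indexed by a bracket `[e i, e j] = c i j k • e k`:
the row vector `- eⁱ - eʲ + eᵏ`. -/
def rootRow {n : ℕ} (i j k h : Fin n) : ℤ :=
  (if k = h then 1 else 0) - (if i = h then 1 else 0) - (if j = h then 1 else 0)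

/-- The mod 2 reduction of the root matrix entries. -/
def rootRow2 {n : ℕ} (i j k h : Fin n) : ZMod 2 := ((rootRow i j k h : ℤ) : ZMod 2)

/-- The Ricci operator of the scalar product with matrix `g` in the nice basis,
`ric_h^k = ¼ g^{im} g^{lp} g_{hq} c_{ilk} c_{mpq} − ½ g^{km} g^{jp} g_{iq} c_{hji} c_{mpq}`. -/
noncomputable def Ric {n : ℕ} (c : Fin n → Fin n → Fin n → ℝ)
    (g : Matrix (Fin n) (Fin n) ℝ) : Matrix (Fin n) (Fin n) ℝ :=
  Matrix.of fun h k =>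
    (1/4 : ℝ) * (∑ i, ∑ m, ∑ l, ∑ p, ∑ q,
        g⁻¹ i m * g⁻¹ l p * g h q * c i l k * c m p q)
    - (1/2 : ℝ) * (∑ m, ∑ j, ∑ p, ∑ i, ∑ q,
        g⁻¹ k m * g⁻¹ j p * g i q * c h j i * c m p q)

/-- Condition (E): the Ricci operator equals `½ id`. -/
def EinsteinE {n : ℕ} (c : Fin n → Fin n → Fin n → ℝ)
    (g : Matrix (Fin n) (Fin n) ℝ) : Prop :=
  Ric c g = (1/2 : ℝ) • (1 : Matrix (Fin n) (Fin n) ℝ)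

/-- The matrix of the `σ`-diagonal bilinear form `∑ᵢ gᵢ eⁱ ⊗ e^{σ i}`. -/
def sigmaDiag {n : ℕ} (σ : Equiv.Perm (Fin n)) (gv : Fin n → ℝ) :
    Matrix (Fin n) (Fin n) ℝ :=
  Matrix.of fun i j => if σ i = j then gv i else 0

/-- `σ` is a diagram involution: it squares to the identity and preserves the
set of nonzero structure constants. -/
def IsDiagramInvolution {n : ℕ} (c : Fin n → Fin n → Fin n → ℝ)
    (σ : Equiv.Perm (Fin n)) : Prop :=
  (∀ i, σ (σ i) = i) ∧ ∀ i j k, c i j k ≠ 0 → c (σ i) (σ j) (σ k) ≠ 0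

/-- The mod 2 root matrix `M_{Δ,2}` is surjective: every vector indexed by the brackets
`I_Δ` is of the form `M_{Δ,2} s`. -/
def SurjectiveType {n : ℕ} (c : Fin n → Fin n → Fin n → ℝ) : Prop :=
  ∀ y : Fin n → Fin n → Fin n → ZMod 2, ∃ s : Fin n → ZMod 2,
    ∀ i j k, i < j → c i j k ≠ 0 → y i j k = ∑ h, rootRow2 i j k h * s h

/-- Upper-triangular part of the structure constants of the Lie algebra `842:117`:
`[e₁,e₂] = √5 e₅`, `[e₃,e₄] = √5 e₆`, `[e₁,e₅] = √3 e₇`, `[e₂,e₄] = √7 e₇`,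
`[e₃,e₆] = √3 e₇`, `[e₁,e₃] = √7 e₈`, `[e₂,e₅] = √3 e₈`, `[e₄,e₆] = √3 e₈`
(basis indexed by `Fin 8`, so `e₁ = e 0`, …, `e₈ = e 7`). -/
noncomputable def v842 : Fin 8 → Fin 8 → Fin 8 → ℝ := fun i j k =>
  if i = 0 ∧ j = 1 ∧ k = 4 then Real.sqrt 5
  else if i = 2 ∧ j = 3 ∧ k = 5 then Real.sqrt 5
  else if i = 0 ∧ j = 4 ∧ k = 6 then Real.sqrt 3
  else if i = 1 ∧ j = 3 ∧ k = 6 then Real.sqrt 7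
  else if i = 2 ∧ j = 5 ∧ k = 6 then Real.sqrt 3
  else if i = 0 ∧ j = 2 ∧ k = 7 then Real.sqrt 7
  else if i = 1 ∧ j = 4 ∧ k = 7 then Real.sqrt 3
  else if i = 3 ∧ j = 5 ∧ k = 7 then Real.sqrt 3
  else 0

/-- The full (skew-symmetric) structure constants. -/
noncomputable def c842 : Fin 8 → Fin 8 → Fin 8 → ℝ := fun i j k =>
  v842 i j k - v842 j i k


/-! ### Auxiliary lemmas -/

noncomputable def brkt (x y : Fin 8 → ℝ) : Fin 8 → ℝ := fun k =>
  if k = 4 then Real.sqrt 5 * (x 0 * y 1 - x 1 * y 0)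
  else if k = 5 then Real.sqrt 5 * (x 2 * y 3 - x 3 * y 2)
  else if k = 6 then Real.sqrt 3 * (x 0 * y 4 - x 4 * y 0)
      + Real.sqrt 7 * (x 1 * y 3 - x 3 * y 1) + Real.sqrt 3 * (x 2 * y 5 - x 5 * y 2)
  else if k = 7 then Real.sqrt 7 * (x 0 * y 2 - x 2 * y 0)
      + Real.sqrt 3 * (x 1 * y 4 - x 4 * y 1) + Real.sqrt 3 * (x 3 * y 5 - x 5 * y 3)
  else 0

lemma bracket_c842 (x y : Fin 8 → ℝ) : bracket c842 x y = brkt x y := by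
  funext k
  fin_cases k <;>
    simp [bracket, c842, v842, brkt, Fin.sum_univ_eight] <;>
    ring

lemma v842_support {i j k : Fin 8} (h : v842 i j k ≠ 0) :
    (i=0∧j=1∧k=4) ∨ (i=2∧j=3∧k=5) ∨ (i=0∧j=4∧k=6) ∨ (i=1∧j=3∧k=6) ∨ (i=2∧j=5∧k=6)
      ∨ (i=0∧j=2∧k=7) ∨ (i=1∧j=4∧k=7) ∨ (i=3∧j=5∧k=7) := by
  unfold v842 at h
  split_ifs at h with h1 h2 h3 h4 h5 h6 h7 h8
  · exact Or.inl h1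
  · exact Or.inr (Or.inl h2)
  · exact Or.inr (Or.inr (Or.inl h3))
  · exact Or.inr (Or.inr (Or.inr (Or.inl h4)))
  · exact Or.inr (Or.inr (Or.inr (Or.inr (Or.inl h5))))
  · exact Or.inr (Or.inr (Or.inr (Or.inr (Or.inr (Or.inl h6)))))
  · exact Or.inr (Or.inr (Or.inr (Or.inr (Or.inr (Or.inr (Or.inl h7))))))
  · exact Or.inr (Or.inr (Or.inr (Or.inr (Or.inr (Or.inr (Or.inr h8))))))
  · exact absurd rfl h

lemma c842_support {i j k : Fin 8} (h : c842 i j k ≠ 0) :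
    v842 i j k ≠ 0 ∨ v842 j i k ≠ 0 := by
  by_contra h'
  push_neg at h'
  exact h (by simp [c842, h'.1, h'.2])

set_option linter.unreachableTactic false in
set_option linter.unusedTactic false in
lemma c842_nice_k : ∀ i j k k', c842 i j k ≠ 0 → c842 i j k' ≠ 0 → k = k' := by
  intro i j k k' h h'
  rcases (c842_support h).imp v842_support v842_support with h1 | h1 <;>
  rcases (c842_support h').imp v842_support v842_support with h2 | h2 <;>
  rcases h1 with h1|h1|h1|h1|h1|h1|h1|h1 <;> rcases h2 with h2|h2|h2|h2|h2|h2|h2|h2 <;>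
  obtain ⟨rfl, rfl, rfl⟩ := h1 <;> (try simp at h2) <;>
  first | exact h2.symm | exact h2 | exact h2.2.2.symm | exact h2.2.2

set_option linter.unreachableTactic false in
set_option linter.unusedTactic false in
lemma c842_nice_j : ∀ i j j' k, c842 i j k ≠ 0 → c842 i j' k ≠ 0 → j = j' := by
  intro i j j' k h h'
  rcases (c842_support h).imp v842_support v842_support with h1 | h1 <;>
  rcases (c842_support h').imp v842_support v842_support with h2 | h2 <;>
  rcases h1 with h1|h1|h1|h1|h1|h1|h1|h1 <;> rcases h2 with h2|h2|h2|h2|h2|h2|h2|h2 <;>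
  obtain ⟨rfl, rfl, rfl⟩ := h1 <;> (try simp at h2) <;>
  first | exact h2.symm | exact h2 | exact h2.2.2.symm | exact h2.2.2

notation "dvec" => (![1, 1, 1, 1, -1, -1, 1, 1] : Fin 8 → ℝ)

lemma dveq : dvec = fun i => if i = 4 ∨ i = 5 then (-1 : ℝ) else 1 := by
  funext i; fin_cases i <;> rfl

lemma ginv : (Matrix.diagonal dvec)⁻¹ = Matrix.diagonal dvec := by
  apply Matrix.inv_eq_right_inv
  rw [Matrix.diagonal_mul_diagonal]
  ext i j
  simp only [Matrix.diagonal_apply, Matrix.one_apply, Pi.mul_apply, dveq]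
  split_ifs <;> norm_num

lemma collapse1 (h k : Fin 8) :
    (∑ i, ∑ m, ∑ l, ∑ p, ∑ q,
       (Matrix.diagonal dvec)⁻¹ i m * (Matrix.diagonal dvec)⁻¹ l p *
       Matrix.diagonal dvec h q * c842 i l k * c842 m p q)
    = ∑ i, ∑ l, dvec i * dvec l * dvec h * (c842 i l k * c842 i l h) := by
  rw [ginv]
  refine Finset.sum_congr rfl fun i _ => ?_
  rw [Finset.sum_eq_single_of_mem i (Finset.mem_univ i) (fun m _ hm => by
    simp [Matrix.diagonal_apply, Ne.symm hm])]
  refine Finset.sum_congr rfl fun l _ => ?_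
  rw [Finset.sum_eq_single_of_mem l (Finset.mem_univ l) (fun p _ hp => by
    simp [Matrix.diagonal_apply, Ne.symm hp])]
  rw [Finset.sum_eq_single_of_mem h (Finset.mem_univ h) (fun q _ hq => by
    simp [Matrix.diagonal_apply, Ne.symm hq])]
  simp [Matrix.diagonal_apply]
  ring

lemma collapse2 (h k : Fin 8) :
    (∑ m, ∑ j, ∑ p, ∑ i, ∑ q,
       (Matrix.diagonal dvec)⁻¹ k m * (Matrix.diagonal dvec)⁻¹ j p *
       Matrix.diagonal dvec i q * c842 h j i * c842 m p q)
    = ∑ j, ∑ i, dvec k * dvec j * dvec i * (c842 h j i * c842 k j i) := by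
  rw [ginv]
  rw [Finset.sum_eq_single_of_mem k (Finset.mem_univ k) (fun m _ hm => by
    simp [Matrix.diagonal_apply, Ne.symm hm])]
  refine Finset.sum_congr rfl fun j _ => ?_
  rw [Finset.sum_eq_single_of_mem j (Finset.mem_univ j) (fun p _ hp => by
    simp [Matrix.diagonal_apply, Ne.symm hp])]
  refine Finset.sum_congr rfl fun i _ => ?_
  rw [Finset.sum_eq_single_of_mem i (Finset.mem_univ i) (fun q _ hq => by
    simp [Matrix.diagonal_apply, Ne.symm hq])]
  simp [Matrix.diagonal_apply]
  ring

set_option maxHeartbeats 1000000 in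
set_option linter.unreachableTactic false in
set_option linter.unusedTactic false in
lemma einstein842 : EinsteinE c842 (Matrix.diagonal ![1, 1, 1, 1, -1, -1, 1, 1]) := by
  unfold EinsteinE
  ext h k
  simp only [Ric, Matrix.of_apply, Matrix.smul_apply, Matrix.one_apply, smul_eq_mul]
  rw [collapse1 h k, collapse2 h k]
  fin_cases h <;> fin_cases k <;>
    simp [Fin.sum_univ_eight, c842, v842, dveq] <;>
    ring_nf <;>
    norm_num [Real.sq_sqrt, Real.mul_self_sqrt]


/-- The Lie algebra `842:117` with the given structure constants is nilpotent, the given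
basis is nice, and the diagonal metric `⟨eᵢ,eᵢ⟩ = (1,1,1,1,−1,−1,1,1)` (signature `(6,2)`)
satisfies (E): `ric = ½ id`. -/
theorem einstein_842_117_diagonal :
    IsNiceNilpotent c842 ∧
    EinsteinE c842 (Matrix.diagonal ![1, 1, 1, 1, -1, -1, 1, 1]) := by
  constructor
  · constructor
    · intro i j k
      simp only [c842]
      ring
    · intro x y z
      funext k
      simp only [bracket_c842, Pi.add_apply, Pi.zero_apply]
      fin_cases k <;> simp [brkt] <;> ring
    · refine ⟨3, fun v w => ?_⟩
      simp only [List.ofFn_succ, List.foldr, Fin.isValue]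
      rw [bracket_c842, bracket_c842, bracket_c842]
      funext k
      fin_cases k <;> simp [brkt]
    · exact c842_nice_k
    · exact c842_nice_j
  · exact einstein842
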